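/- arXiv:math/0209308 — 2 statements merged into one kernel-verified Lean document; each statement's English description precedes it below -/
import Mathlib

section
/- Let F be a field, R = F[X,Y,Z], and I = (X^4, X^3Y, XY^3, Y^4, X^2Y^2Z). Then: (i) X^2Y^2 ∈ I^2 : I; (ii) the Ratliff-Rush closure of I is ~I = (X,Y)^4; (iii) I : (X^2Y^2) = (X,Y,Z), so the maximal ideal (X,Y,Z) is an associated prime of R/I; and (iv) (X,Y,Z) is not an associated prime of R/~I = R/(X,Y)^4, since Z is a non-zerodivisor modulo (X,Y)^4. -/
/-- The Ratliff-Rush closure of the power `I^n`:  `⋃_{k≥0} (I^{n+k} : I^k)`. -/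
noncomputable def rrPow {R : Type*} [CommRing R] (I : Ideal R) (n : ℕ) : Ideal R :=
  ⨆ k : ℕ, (I ^ (n + k)).colon ((I ^ k : Ideal R) : Set R)

open MvPolynomial

section Aux

variable {F : Type*} [Field F]

/-- The ideal of polynomials all of whose monomials have `X,Y`-degree at least `n`. -/
def degIdeal (F : Type*) [Field F] (n : ℕ) : Ideal (MvPolynomial (Fin 3) F) where
  carrier := {f | ∀ m ∈ f.support, n ≤ m 0 + m 1}
  zero_mem' := by simp
  add_mem' := by
    classical
    intro a b ha hb m hm
    rcases Finset.mem_union.mp (MvPolynomial.support_add hm) with h | h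
    · exact ha m h
    · exact hb m h
  smul_mem' := by
    classical
    intro c f hf m hm
    rw [smul_eq_mul] at hm
    obtain ⟨a, _, b, hb, rfl⟩ := Finset.mem_add.mp (MvPolynomial.support_mul c f hm)
    have := hf b hb
    simp only [Finsupp.add_apply]
    omega

theorem mem_span_XY_pow (n : ℕ) (f : MvPolynomial (Fin 3) F) :
    f ∈ (Ideal.span {MvPolynomial.X 0, MvPolynomial.X 1} :
        Ideal (MvPolynomial (Fin 3) F)) ^ n ↔ ∀ m ∈ f.support, n ≤ m 0 + m 1 := by
  classical
  constructor
  · have hle1 : (Ideal.span {MvPolynomial.X 0, MvPolynomial.X 1} :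
        Ideal (MvPolynomial (Fin 3) F)) ≤ degIdeal F 1 := by
      rw [Ideal.span_le]
      rintro g hg
      rcases hg with rfl | rfl <;>
      · intro m hm
        rw [MvPolynomial.support_X, Finset.mem_singleton] at hm
        subst hm
        simp [Finsupp.single_apply]
    have key : ∀ k : ℕ, (Ideal.span {MvPolynomial.X 0, MvPolynomial.X 1} :
        Ideal (MvPolynomial (Fin 3) F)) ^ k ≤ degIdeal F k := by
      intro k
      induction k with
      | zero => intro g _ m _; exact Nat.zero_le _
      | succ k ih =>
        rw [pow_succ]
        refine Ideal.mul_le.mpr fun r hr s hs => ?_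
        intro m hm
        obtain ⟨a, ha, b, hb, rfl⟩ := Finset.mem_add.mp (MvPolynomial.support_mul r s hm)
        have h1 := ih hr a ha
        have h2 := hle1 hs b hb
        simp only [Finsupp.add_apply]
        omega
    exact fun h => key n h
  · intro hf
    rw [MvPolynomial.as_sum f]
    refine Ideal.sum_mem _ fun m hm => ?_
    have hcond := hf m hm
    set a := min (m 0) n with ha
    have ha0 : a ≤ m 0 := min_le_left _ _
    have hb0 : n - a ≤ m 1 := by omega
    have hv : (Finsupp.single (0 : Fin 3) a + Finsupp.single (1 : Fin 3) (n - a)) ≤ m := by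
      rw [Finsupp.le_def]
      intro i
      fin_cases i <;> simp [Finsupp.single_apply] <;> omega
    have heq : (MvPolynomial.monomial m (MvPolynomial.coeff m f) : MvPolynomial (Fin 3) F)
        = MvPolynomial.monomial
            (m - (Finsupp.single (0:Fin 3) a + Finsupp.single (1:Fin 3) (n-a)))
            (MvPolynomial.coeff m f)
          * (MvPolynomial.X 0 ^ a * MvPolynomial.X 1 ^ (n - a)) := by
      rw [MvPolynomial.X_pow_eq_monomial, MvPolynomial.X_pow_eq_monomial,
        MvPolynomial.monomial_mul, MvPolynomial.monomial_mul, mul_one, mul_one,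
        tsub_add_cancel_of_le hv]
    rw [heq]
    refine Ideal.mul_mem_left _ _ ?_
    have hmem : (MvPolynomial.X 0 ^ a * MvPolynomial.X 1 ^ (n - a) : MvPolynomial (Fin 3) F)
        ∈ (Ideal.span {MvPolynomial.X 0, MvPolynomial.X 1} :
            Ideal (MvPolynomial (Fin 3) F)) ^ (a + (n - a)) := by
      rw [pow_add]
      exact Ideal.mul_mem_mul (Ideal.pow_mem_pow (Ideal.subset_span (by simp)) a)
        (Ideal.pow_mem_pow (Ideal.subset_span (by simp)) _)
    rwa [show a + (n - a) = n by omega] at hmem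

theorem support_shift (f : MvPolynomial (Fin 3) F) (s m : Fin 3 →₀ ℕ)
    (hm : m ∈ f.support) : m + s ∈ (f * MvPolynomial.monomial s 1).support := by
  rw [MvPolynomial.mem_support_iff] at hm ⊢
  rwa [MvPolynomial.coeff_mul_monomial, mul_one]

end Aux


set_option maxHeartbeats 4000000 in
/-- Let `R = F[X,Y,Z]` and `I = (X^4, X^3Y, XY^3, Y^4, X^2Y^2Z)`.  Then
(i) `X^2Y^2 ∈ I^2 : I`; (ii) `~I = (X,Y)^4`; (iii) `I : X^2Y^2 = (X,Y,Z)`, so `(X,Y,Z)`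
is an associated prime of `R/I`; and (iv) `(X,Y,Z)` is not an associated prime of
`R/~I = R/(X,Y)^4`, since `Z` is a non-zerodivisor modulo `(X,Y)^4`. -/
theorem stmt_18 (F : Type*) [Field F]
    (X Y Z : MvPolynomial (Fin 3) F)
    (hX : X = MvPolynomial.X 0) (hY : Y = MvPolynomial.X 1) (hZ : Z = MvPolynomial.X 2)
    (I : Ideal (MvPolynomial (Fin 3) F))
    (hI : I = Ideal.span {X ^ 4, X ^ 3 * Y, X * Y ^ 3, Y ^ 4, X ^ 2 * Y ^ 2 * Z}) :
    X ^ 2 * Y ^ 2 ∈ (I ^ 2).colon I ∧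
    rrPow I 1 = Ideal.span {X, Y} ^ 4 ∧
    I.colon (Ideal.span {X ^ 2 * Y ^ 2}) = Ideal.span {X, Y, Z} ∧
    IsAssociatedPrime (Ideal.span {X, Y, Z}) (MvPolynomial (Fin 3) F ⧸ I) ∧
    ¬ IsAssociatedPrime (Ideal.span {X, Y, Z})
        (MvPolynomial (Fin 3) F ⧸ (Ideal.span {X, Y} ^ 4)) ∧
    (∀ f : MvPolynomial (Fin 3) F,
      Z * f ∈ Ideal.span {X, Y} ^ 4 → f ∈ Ideal.span {X, Y} ^ 4) := by
  classical
  subst hX hY hZ hI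
  set S : Set (MvPolynomial (Fin 3) F) :=
    {MvPolynomial.X 0 ^ 4, MvPolynomial.X 0 ^ 3 * MvPolynomial.X 1,
     MvPolynomial.X 0 * MvPolynomial.X 1 ^ 3, MvPolynomial.X 1 ^ 4,
     MvPolynomial.X 0 ^ 2 * MvPolynomial.X 1 ^ 2 * MvPolynomial.X 2} with hS
  -- monomial forms of the generators
  have hXpow : ∀ (i : Fin 3) (k : ℕ),
      (MvPolynomial.X i : MvPolynomial (Fin 3) F) ^ k = monomial (Finsupp.single i k) 1 :=
    fun i k => MvPolynomial.X_pow_eq_monomial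
  have hA : (MvPolynomial.X 0 : MvPolynomial (Fin 3) F) ^ 4
      = monomial (Finsupp.single 0 4) 1 := hXpow 0 4
  have hB : (MvPolynomial.X 0 : MvPolynomial (Fin 3) F) ^ 3 * MvPolynomial.X 1
      = monomial (Finsupp.single 0 3 + Finsupp.single 1 1) 1 := by
    rw [← pow_one (MvPolynomial.X 1), hXpow, hXpow, monomial_mul, one_mul]
  have hC : (MvPolynomial.X 0 : MvPolynomial (Fin 3) F) * MvPolynomial.X 1 ^ 3
      = monomial (Finsupp.single 0 1 + Finsupp.single 1 3) 1 := by
    rw [← pow_one (MvPolynomial.X 0), hXpow, hXpow, monomial_mul, one_mul]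
  have hD : (MvPolynomial.X 1 : MvPolynomial (Fin 3) F) ^ 4
      = monomial (Finsupp.single 1 4) 1 := hXpow 1 4
  have hW : (MvPolynomial.X 0 : MvPolynomial (Fin 3) F) ^ 2 * MvPolynomial.X 1 ^ 2
      = monomial (Finsupp.single 0 2 + Finsupp.single 1 2) 1 := by
    rw [hXpow, hXpow, monomial_mul, one_mul]
  have hE : (MvPolynomial.X 0 : MvPolynomial (Fin 3) F) ^ 2 * MvPolynomial.X 1 ^ 2
        * MvPolynomial.X 2
      = monomial (Finsupp.single 0 2 + Finsupp.single 1 2 + Finsupp.single 2 1) 1 := by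
    rw [hW, ← pow_one (MvPolynomial.X 2), hXpow, monomial_mul, one_mul]
  set SI : Set (Fin 3 →₀ ℕ) :=
    {Finsupp.single 0 4, Finsupp.single 0 3 + Finsupp.single 1 1,
     Finsupp.single 0 1 + Finsupp.single 1 3, Finsupp.single 1 4,
     Finsupp.single 0 2 + Finsupp.single 1 2 + Finsupp.single 2 1} with hSI
  have hImono : Ideal.span S = Ideal.span ((fun s => monomial s (1:F)) '' SI) := by
    rw [hS, hSI]
    simp only [Set.image_insert_eq, Set.image_singleton]
    rw [hA, hB, hC, hD, hE]
  have hImem : ∀ f : MvPolynomial (Fin 3) F,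
      f ∈ Ideal.span S ↔ ∀ m ∈ f.support, ∃ s ∈ SI, s ≤ m := by
    intro f
    rw [hImono]
    exact MvPolynomial.mem_ideal_span_monomial_image
  -- products of two generators are in I^2
  have h2 : ∀ a b : MvPolynomial (Fin 3) F, a ∈ S → b ∈ S →
      a * b ∈ (Ideal.span S) ^ 2 := by
    intro a b ha hb
    rw [sq]
    exact Ideal.mul_mem_mul (Ideal.subset_span ha) (Ideal.subset_span hb)
  -- Part (i)
  have part1 : (MvPolynomial.X 0 : MvPolynomial (Fin 3) F) ^ 2 * MvPolynomial.X 1 ^ 2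
      ∈ ((Ideal.span S) ^ 2).colon (Ideal.span S) := by
    rw [Submodule.mem_colon]
    intro p hp
    induction hp using Submodule.span_induction with
    | mem g hg =>
      simp only [hS, Set.mem_insert_iff, Set.mem_singleton_iff] at hg
      rw [smul_eq_mul]
      rcases hg with rfl | rfl | rfl | rfl | rfl
      · rw [show (MvPolynomial.X 0 : MvPolynomial (Fin 3) F)^2 * MvPolynomial.X 1^2
            * (MvPolynomial.X 0^4)
            = (MvPolynomial.X 0^3 * MvPolynomial.X 1) * (MvPolynomial.X 0^3 * MvPolynomial.X 1)
            by ring]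
        exact h2 _ _ (by simp [hS]) (by simp [hS])
      · rw [show (MvPolynomial.X 0 : MvPolynomial (Fin 3) F)^2 * MvPolynomial.X 1^2
            * (MvPolynomial.X 0^3 * MvPolynomial.X 1)
            = (MvPolynomial.X 0^4) * (MvPolynomial.X 0 * MvPolynomial.X 1^3) by ring]
        exact h2 _ _ (by simp [hS]) (by simp [hS])
      · rw [show (MvPolynomial.X 0 : MvPolynomial (Fin 3) F)^2 * MvPolynomial.X 1^2
            * (MvPolynomial.X 0 * MvPolynomial.X 1^3)
            = (MvPolynomial.X 0^3 * MvPolynomial.X 1) * (MvPolynomial.X 1^4) by ring]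
        exact h2 _ _ (by simp [hS]) (by simp [hS])
      · rw [show (MvPolynomial.X 0 : MvPolynomial (Fin 3) F)^2 * MvPolynomial.X 1^2
            * (MvPolynomial.X 1^4)
            = (MvPolynomial.X 0 * MvPolynomial.X 1^3) * (MvPolynomial.X 0 * MvPolynomial.X 1^3)
            by ring]
        exact h2 _ _ (by simp [hS]) (by simp [hS])
      · rw [show (MvPolynomial.X 0 : MvPolynomial (Fin 3) F)^2 * MvPolynomial.X 1^2
            * (MvPolynomial.X 0^2 * MvPolynomial.X 1^2 * MvPolynomial.X 2)
            = MvPolynomial.X 2 * ((MvPolynomial.X 0^4) * (MvPolynomial.X 1^4)) by ring]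
        exact Ideal.mul_mem_left _ _ (h2 _ _ (by simp [hS]) (by simp [hS]))
    | zero => rw [smul_eq_mul, mul_zero]; exact zero_mem _
    | add x y hx hy ihx ihy => rw [smul_eq_mul, mul_add]; exact add_mem ihx ihy
    | smul r x hx ih =>
      rw [smul_eq_mul, smul_eq_mul, mul_left_comm]
      exact Ideal.mul_mem_left _ _ ih
  -- membership of monomials in J = (X,Y)^4
  have hmonoJ : ∀ s : Fin 3 →₀ ℕ, 4 ≤ s 0 + s 1 →
      (monomial s (1:F) : MvPolynomial (Fin 3) F)
        ∈ (Ideal.span {MvPolynomial.X 0, MvPolynomial.X 1} :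
            Ideal (MvPolynomial (Fin 3) F)) ^ 4 := by
    intro s hs
    rw [mem_span_XY_pow]
    intro m hm
    rw [MvPolynomial.support_monomial, if_neg one_ne_zero, Finset.mem_singleton] at hm
    subst hm
    exact hs
  have hIJ : Ideal.span S ≤ (Ideal.span {MvPolynomial.X 0, MvPolynomial.X 1} :
      Ideal (MvPolynomial (Fin 3) F)) ^ 4 := by
    rw [Ideal.span_le]
    rintro g hg
    simp only [hS, Set.mem_insert_iff, Set.mem_singleton_iff] at hg
    rw [SetLike.mem_coe]
    rcases hg with rfl | rfl | rfl | rfl | rfl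
    · rw [hA]; exact hmonoJ _ (by simp [Finsupp.single_apply])
    · rw [hB]; exact hmonoJ _ (by simp [Finsupp.add_apply, Finsupp.single_apply])
    · rw [hC]; exact hmonoJ _ (by simp [Finsupp.add_apply, Finsupp.single_apply])
    · rw [hD]; exact hmonoJ _ (by simp [Finsupp.single_apply])
    · rw [hE]; exact hmonoJ _ (by simp [Finsupp.add_apply, Finsupp.single_apply])
  -- Part (vi)
  have part6 : ∀ f : MvPolynomial (Fin 3) F,
      MvPolynomial.X 2 * f ∈ (Ideal.span {MvPolynomial.X 0, MvPolynomial.X 1} :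
          Ideal (MvPolynomial (Fin 3) F)) ^ 4 →
      f ∈ (Ideal.span {MvPolynomial.X 0, MvPolynomial.X 1} :
          Ideal (MvPolynomial (Fin 3) F)) ^ 4 := by
    intro f hf
    rw [mem_span_XY_pow] at hf ⊢
    intro m hm
    have hsup : m + Finsupp.single 2 1 ∈ (MvPolynomial.X 2 * f).support := by
      rw [show (MvPolynomial.X 2 : MvPolynomial (Fin 3) F) * f
          = f * monomial (Finsupp.single 2 1) 1 by
        rw [← pow_one (MvPolynomial.X 2), hXpow 2 1]; ring]
      exact support_shift f _ m hm
    have h4 := hf _ hsup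
    simp only [Finsupp.add_apply, Finsupp.single_apply] at h4
    simp only [show ((2:Fin 3) = 0) = False by simp, show ((2:Fin 3) = 1) = False by simp,
      if_false, add_zero] at h4
    exact h4
  -- {X,Y,Z} as the image of all variables
  have himg : ({MvPolynomial.X 0, MvPolynomial.X 1, MvPolynomial.X 2} :
      Set (MvPolynomial (Fin 3) F)) = MvPolynomial.X '' Set.univ := by
    ext g
    simp only [Set.image_univ, Set.mem_range, Set.mem_insert_iff, Set.mem_singleton_iff]
    constructor
    · rintro (rfl | rfl | rfl) <;> exact ⟨_, rfl⟩
    · rintro ⟨i, rfl⟩; fin_cases i <;> simp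
  have hMmem : ∀ f : MvPolynomial (Fin 3) F,
      f ∈ Ideal.span ({MvPolynomial.X 0, MvPolynomial.X 1, MvPolynomial.X 2} :
        Set (MvPolynomial (Fin 3) F)) ↔ ∀ m ∈ f.support, m ≠ 0 := by
    intro f
    rw [himg, MvPolynomial.mem_ideal_span_X_image]
    constructor
    · intro h m hm hm0
      obtain ⟨i, _, hi⟩ := h m hm
      rw [hm0] at hi
      simp at hi
    · intro h m hm
      have := h m hm
      have h2 : ∃ i, m i ≠ 0 := by
        by_contra hc
        push_neg at hc
        exact this (Finsupp.ext hc)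
      obtain ⟨i, hi⟩ := h2
      exact ⟨i, Set.mem_univ i, hi⟩
  -- Part (iii)
  have part3 : (Ideal.span S).colon
      ((Ideal.span {MvPolynomial.X 0 ^ 2 * MvPolynomial.X 1 ^ 2} :
        Ideal (MvPolynomial (Fin 3) F)) : Set (MvPolynomial (Fin 3) F))
      = Ideal.span {MvPolynomial.X 0, MvPolynomial.X 1, MvPolynomial.X 2} := by
    apply le_antisymm
    · intro f hf
      rw [Ideal.mem_colon_span_singleton, hImem] at hf
      rw [hMmem]
      intro m hm
      rintro rfl
      have hsup : (0 : Fin 3 →₀ ℕ) + (Finsupp.single 0 2 + Finsupp.single 1 2)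
          ∈ (f * (MvPolynomial.X 0 ^ 2 * MvPolynomial.X 1 ^ 2)).support := by
        rw [hW]
        exact support_shift f _ 0 hm
      obtain ⟨s, hsSI, hle⟩ := hf _ hsup
      rw [zero_add, Finsupp.le_def] at hle
      simp only [hSI, Set.mem_insert_iff, Set.mem_singleton_iff] at hsSI
      rcases hsSI with rfl | rfl | rfl | rfl | rfl
      · have := hle 0
        simp [Finsupp.add_apply, Finsupp.single_apply] at this
      · have := hle 0
        simp [Finsupp.add_apply, Finsupp.single_apply] at this
      · have := hle 1
        simp [Finsupp.add_apply, Finsupp.single_apply] at this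
      · have := hle 1
        simp [Finsupp.add_apply, Finsupp.single_apply] at this
      · have := hle 2
        simp [Finsupp.add_apply, Finsupp.single_apply] at this
    · rw [Ideal.span_le]
      rintro g hg
      simp only [Set.mem_insert_iff, Set.mem_singleton_iff] at hg
      rw [SetLike.mem_coe]
      rcases hg with rfl | rfl | rfl <;> rw [Ideal.mem_colon_span_singleton]
      · rw [show (MvPolynomial.X 0 : MvPolynomial (Fin 3) F)
            * (MvPolynomial.X 0 ^ 2 * MvPolynomial.X 1 ^ 2)
            = MvPolynomial.X 1 * (MvPolynomial.X 0 ^ 3 * MvPolynomial.X 1) by ring]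
        exact Ideal.mul_mem_left _ _ (Ideal.subset_span (by simp [hS]))
      · rw [show (MvPolynomial.X 1 : MvPolynomial (Fin 3) F)
            * (MvPolynomial.X 0 ^ 2 * MvPolynomial.X 1 ^ 2)
            = MvPolynomial.X 0 * (MvPolynomial.X 0 * MvPolynomial.X 1 ^ 3) by ring]
        exact Ideal.mul_mem_left _ _ (Ideal.subset_span (by simp [hS]))
      · rw [show (MvPolynomial.X 2 : MvPolynomial (Fin 3) F)
            * (MvPolynomial.X 0 ^ 2 * MvPolynomial.X 1 ^ 2)
            = MvPolynomial.X 0 ^ 2 * MvPolynomial.X 1 ^ 2 * MvPolynomial.X 2 by ring]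
        exact Ideal.subset_span (by simp [hS])
  -- (X,Y,Z) is prime
  have hMprime : (Ideal.span {MvPolynomial.X 0, MvPolynomial.X 1, MvPolynomial.X 2} :
      Ideal (MvPolynomial (Fin 3) F)).IsPrime := by
    have hker : (Ideal.span {MvPolynomial.X 0, MvPolynomial.X 1, MvPolynomial.X 2} :
        Ideal (MvPolynomial (Fin 3) F))
        = RingHom.ker (MvPolynomial.eval (0 : Fin 3 → F)) := by
      apply le_antisymm
      · rw [Ideal.span_le]
        rintro g hg
        simp only [Set.mem_insert_iff, Set.mem_singleton_iff] at hg
        rcases hg with rfl | rfl | rfl <;> simp [RingHom.mem_ker]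
      · intro f hf
        rw [RingHom.mem_ker] at hf
        have hc0 : MvPolynomial.coeff 0 f = 0 := by
          rw [MvPolynomial.eval_zero, MvPolynomial.constantCoeff_eq] at hf
          exact hf
        rw [hMmem]
        intro m hm
        rintro rfl
        rw [MvPolynomial.mem_support_iff] at hm
        exact hm hc0
    rw [hker]
    exact RingHom.ker_isPrime _
  -- Part (iv)
  have part4 : IsAssociatedPrime
      (Ideal.span {MvPolynomial.X 0, MvPolynomial.X 1, MvPolynomial.X 2} :
        Ideal (MvPolynomial (Fin 3) F))
      (MvPolynomial (Fin 3) F ⧸ Ideal.span S) := by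
    rw [isAssociatedPrime_iff]
    refine ⟨hMprime,
      Ideal.Quotient.mk (Ideal.span S) (MvPolynomial.X 0 ^ 2 * MvPolynomial.X 1 ^ 2), ?_⟩
    rw [← part3]
    ext r
    have hsm : r • (Ideal.Quotient.mk (Ideal.span S)
          (MvPolynomial.X 0 ^ 2 * MvPolynomial.X 1 ^ 2))
        = Ideal.Quotient.mk (Ideal.span S)
          (r * (MvPolynomial.X 0 ^ 2 * MvPolynomial.X 1 ^ 2)) := by
      rfl
    rw [Submodule.mem_colon_singleton, Submodule.mem_bot, hsm, Ideal.Quotient.eq_zero_iff_mem,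
      Ideal.mem_colon_span_singleton]
  -- Part (v)
  have part5 : ¬ IsAssociatedPrime
      (Ideal.span {MvPolynomial.X 0, MvPolynomial.X 1, MvPolynomial.X 2} :
        Ideal (MvPolynomial (Fin 3) F))
      (MvPolynomial (Fin 3) F ⧸ ((Ideal.span {MvPolynomial.X 0, MvPolynomial.X 1} :
        Ideal (MvPolynomial (Fin 3) F)) ^ 4)) := by
    rw [isAssociatedPrime_iff]
    rintro ⟨hp, x, hx⟩
    obtain ⟨f, rfl⟩ := Ideal.Quotient.mk_surjective x
    have hZmem : (MvPolynomial.X 2 : MvPolynomial (Fin 3) F)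
        ∈ Ideal.span {MvPolynomial.X 0, MvPolynomial.X 1, MvPolynomial.X 2} :=
      Ideal.subset_span (by simp)
    rw [hx, Submodule.mem_colon_singleton, Submodule.mem_bot] at hZmem
    have hsm : (MvPolynomial.X 2 : MvPolynomial (Fin 3) F) •
          Ideal.Quotient.mk _ f = Ideal.Quotient.mk
          ((Ideal.span {MvPolynomial.X 0, MvPolynomial.X 1} :
            Ideal (MvPolynomial (Fin 3) F)) ^ 4) (MvPolynomial.X 2 * f) := by
      rw [Algebra.smul_def, Ideal.Quotient.algebraMap_eq, ← map_mul]
    rw [hsm, Ideal.Quotient.eq_zero_iff_mem] at hZmem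
    have hfJ := part6 f hZmem
    have hx0 : Ideal.Quotient.mk ((Ideal.span {MvPolynomial.X 0, MvPolynomial.X 1} :
        Ideal (MvPolynomial (Fin 3) F)) ^ 4) f = 0 :=
      (Ideal.Quotient.eq_zero_iff_mem).mpr hfJ
    rw [hx0] at hx
    exact hp.ne_top (hx.trans (by ext; simp))
  -- Part (ii)
  have part2 : rrPow (Ideal.span S) 1
      = (Ideal.span {MvPolynomial.X 0, MvPolynomial.X 1} :
          Ideal (MvPolynomial (Fin 3) F)) ^ 4 := by
    apply le_antisymm
    · rw [rrPow]
      apply iSup_le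
      intro k r hr
      have hXk : (MvPolynomial.X 0 : MvPolynomial (Fin 3) F) ^ (4 * k)
          ∈ (Ideal.span S) ^ k := by
        rw [pow_mul]
        exact Ideal.pow_mem_pow (Ideal.subset_span (by simp [hS])) k
      have hrk := Submodule.mem_colon.mp hr _ hXk
      rw [smul_eq_mul] at hrk
      have hrk2 : r * MvPolynomial.X 0 ^ (4 * k)
          ∈ (Ideal.span {MvPolynomial.X 0, MvPolynomial.X 1} :
              Ideal (MvPolynomial (Fin 3) F)) ^ (4 * (1 + k)) := by
        have h1 : (Ideal.span S) ^ (1 + k)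
            ≤ ((Ideal.span {MvPolynomial.X 0, MvPolynomial.X 1} :
                Ideal (MvPolynomial (Fin 3) F)) ^ 4) ^ (1 + k) :=
          Ideal.pow_right_mono hIJ (1 + k)
        rw [← pow_mul] at h1
        exact h1 hrk
      rw [mem_span_XY_pow] at hrk2
      rw [mem_span_XY_pow]
      intro m hm
      have hsup : m + Finsupp.single 0 (4 * k)
          ∈ (r * MvPolynomial.X 0 ^ (4 * k)).support := by
        rw [hXpow 0 (4 * k)]
        exact support_shift r _ m hm
      have h4 := hrk2 _ hsup
      simp only [Finsupp.add_apply, Finsupp.single_apply] at h4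
      simp only [show ((0:Fin 3) = 0) = True by simp, show ((0:Fin 3) = 1) = False by simp,
        if_true, if_false, add_zero] at h4
      omega
    · -- J ≤ rrPow I 1
      have hIrr : Ideal.span S ≤ rrPow (Ideal.span S) 1 := by
        refine le_trans ?_
          (le_iSup (fun k => ((Ideal.span S) ^ (1 + k)).colon
            (((Ideal.span S) ^ k : Ideal (MvPolynomial (Fin 3) F)) : Set (MvPolynomial (Fin 3) F))) 0)
        intro r hr
        rw [Submodule.mem_colon]
        intro p hp
        rw [smul_eq_mul]
        simp only [Nat.add_zero, pow_one]
        exact Ideal.mul_mem_right _ _ hr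
      have hXY2rr : (MvPolynomial.X 0 : MvPolynomial (Fin 3) F) ^ 2 * MvPolynomial.X 1 ^ 2
          ∈ rrPow (Ideal.span S) 1 := by
        refine (le_iSup (fun k => ((Ideal.span S) ^ (1 + k)).colon
          (((Ideal.span S) ^ k : Ideal (MvPolynomial (Fin 3) F)) : Set (MvPolynomial (Fin 3) F))) 1) ?_
        show _ ∈ ((Ideal.span S) ^ (1 + 1)).colon
          (((Ideal.span S) ^ 1 : Ideal (MvPolynomial (Fin 3) F)) : Set (MvPolynomial (Fin 3) F))
        rw [pow_one, show (1 + 1) = 2 from rfl]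
        exact part1
      set T5 : Set (Fin 3 →₀ ℕ) :=
        {Finsupp.single 0 4, Finsupp.single 0 3 + Finsupp.single 1 1,
         Finsupp.single 0 2 + Finsupp.single 1 2,
         Finsupp.single 0 1 + Finsupp.single 1 3, Finsupp.single 1 4} with hT5
      have hJT5 : (Ideal.span {MvPolynomial.X 0, MvPolynomial.X 1} :
            Ideal (MvPolynomial (Fin 3) F)) ^ 4
          ≤ Ideal.span ((fun s => monomial s (1:F)) '' T5) := by
        intro f hf
        rw [mem_span_XY_pow] at hf
        rw [MvPolynomial.mem_ideal_span_monomial_image]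
        intro m hm
        have h4 := hf m hm
        rcases le_or_gt 4 (m 0) with h | h
        · exact ⟨Finsupp.single 0 4, by simp [hT5], Finsupp.single_le_iff.mpr h⟩
        · have hm1 : 4 - m 0 ≤ m 1 := by omega
          set a := m 0 with ham
          interval_cases a
          · refine ⟨Finsupp.single 1 4, by simp [hT5], Finsupp.single_le_iff.mpr (by omega)⟩
          · refine ⟨Finsupp.single 0 1 + Finsupp.single 1 3, by simp [hT5], ?_⟩
            rw [Finsupp.le_def]
            intro i
            fin_cases i <;> simp [Finsupp.single_apply] <;> omega
          · refine ⟨Finsupp.single 0 2 + Finsupp.single 1 2, by simp [hT5], ?_⟩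
            rw [Finsupp.le_def]
            intro i
            fin_cases i <;> simp [Finsupp.single_apply] <;> omega
          · refine ⟨Finsupp.single 0 3 + Finsupp.single 1 1, by simp [hT5], ?_⟩
            rw [Finsupp.le_def]
            intro i
            fin_cases i <;> simp [Finsupp.single_apply] <;> omega
      have hT5rr : Ideal.span ((fun s => monomial s (1:F)) '' T5)
          ≤ rrPow (Ideal.span S) 1 := by
        rw [Ideal.span_le]
        rintro g hg
        simp only [hT5, Set.image_insert_eq, Set.image_singleton, Set.mem_insert_iff,
          Set.mem_singleton_iff] at hg
        rw [SetLike.mem_coe]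
        rcases hg with rfl | rfl | rfl | rfl | rfl
        · rw [← hA]; exact hIrr (Ideal.subset_span (by simp [hS]))
        · rw [← hB]; exact hIrr (Ideal.subset_span (by simp [hS]))
        · rw [← hW]; exact hXY2rr
        · rw [← hC]; exact hIrr (Ideal.subset_span (by simp [hS]))
        · rw [← hD]; exact hIrr (Ideal.subset_span (by simp [hS]))
      exact le_trans hJT5 hT5rr
  exact ⟨part1, part2, part3, part4, part5, part6⟩
end

section
/- Let F be a field, n ≥ 2 an integer, R = F[X, Y, Z_1, …, Z_n], and I = (X^4, X^3Y, XY^3, Y^4) + (X^2Y^2)·(Z_1, …, Z_n). Then the Ratliff-Rush closure of I is ~I = (X,Y)^4; moreover the minimal number of generators of I is 4 + n, while the minimal number of generators of ~I is 5. In particular the minimal number of generators of a regular ideal can exceed that of its Ratliff-Rush closure. -/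
open MvPolynomial

namespace RR19

variable {F : Type*} [Field F] {σ : Type*} [DecidableEq σ]

/-- ideal of polynomials all of whose monomials have `D`-degree at least `d`. -/
def degIdeal (D : (σ →₀ ℕ) → ℕ) (hD : ∀ a b, D (a + b) = D a + D b) (d : ℕ) :
    Ideal (MvPolynomial σ F) where
  carrier := {p | ∀ e ∈ p.support, d ≤ D e}
  zero_mem' := by simp
  add_mem' := by
    intro p q hp hq e he
    rcases Finset.mem_union.mp (MvPolynomial.support_add he) with h | h
    exacts [hp e h, hq e h]
  smul_mem' := by
    intro r p hp e he
    rw [smul_eq_mul] at he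
    obtain ⟨a, _, b, hb, rfl⟩ := Finset.mem_add.mp (support_mul _ _ he)
    have := hp b hb
    rw [hD]
    omega

lemma mem_degIdeal {D hD d} {p : MvPolynomial σ F} :
    p ∈ degIdeal D hD d ↔ ∀ e ∈ p.support, d ≤ D e := Iff.rfl

lemma degIdeal_anti {D hD} {a b : ℕ} (h : a ≤ b) :
    (degIdeal D hD b : Ideal (MvPolynomial σ F)) ≤ degIdeal D hD a :=
  fun _ hp e he => le_trans h (hp e he)

lemma pow_le_degIdeal {D hD a} {J : Ideal (MvPolynomial σ F)}
    (hJ : J ≤ degIdeal D hD a) (k : ℕ) : J ^ k ≤ degIdeal D hD (k * a) := by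
  induction k with
  | zero => intro p hp e he; simp
  | succ k ih =>
    rw [pow_succ]
    intro p hp
    refine Submodule.mul_induction_on hp (fun m hm q hq => ?_)
      (fun x y hx hy => (degIdeal D hD ((k+1)*a)).add_mem hx hy)
    intro e he
    obtain ⟨u, hu, v, hv, rfl⟩ := Finset.mem_add.mp (support_mul _ _ he)
    have h1 := ih hm u hu
    have h2 := hJ hq v hv
    rw [hD]
    have : (k+1) * a = k * a + a := by ring
    omega

lemma mem_span_XY_pow {i0 i1 : σ} (hne : i0 ≠ i1) {d : ℕ} {p : MvPolynomial σ F}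
    (hp : ∀ e ∈ p.support, d ≤ e i0 + e i1) :
    p ∈ Ideal.span {X i0, X i1} ^ d := by
  rw [← p.support_sum_monomial_coeff]
  refine Ideal.sum_mem _ fun e he => ?_
  have h4 := hp e he
  have hXa : (X i0 : MvPolynomial σ F) ^ (e i0) * X i1 ^ (e i1) ∈
      Ideal.span {X i0, X i1} ^ d := by
    have h1 : (X i0 : MvPolynomial σ F) ^ (e i0) ∈ (Ideal.span {X i0, X i1}) ^ (e i0) :=
      Ideal.pow_mem_pow (Ideal.subset_span (by simp)) _
    have h2 : (X i1 : MvPolynomial σ F) ^ (e i1) ∈ (Ideal.span {X i0, X i1}) ^ (e i1) :=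
      Ideal.pow_mem_pow (Ideal.subset_span (by simp)) _
    have h3 := Ideal.mul_mem_mul h1 h2
    rw [← pow_add] at h3
    exact Ideal.pow_le_pow_right h4 h3
  have heq : monomial e (coeff e p) =
      monomial (e - Finsupp.single i0 (e i0) - Finsupp.single i1 (e i1)) (coeff e p) *
        (X i0 ^ (e i0) * X i1 ^ (e i1)) := by
    rw [X_pow_eq_monomial, X_pow_eq_monomial, monomial_mul, monomial_mul, mul_one, mul_one]
    have he2 : e - Finsupp.single i0 (e i0) - Finsupp.single i1 (e i1) +
        (Finsupp.single i0 (e i0) + Finsupp.single i1 (e i1)) = e := by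
      ext i
      simp only [Finsupp.add_apply, Finsupp.tsub_apply, Finsupp.single_apply]
      rcases eq_or_ne i i0 with rfl | h0
      · simp [hne, Ne.symm hne]
      rcases eq_or_ne i i1 with rfl | h1
      · simp [hne, Ne.symm h0]
      · simp [Ne.symm h0, Ne.symm h1]
    rw [he2]
  rw [heq]
  exact Ideal.mul_mem_left _ _ hXa

lemma coeff_mul_eq {g r : MvPolynomial σ F} {E : σ →₀ ℕ}
    (h : ∀ u v, u + v = E → coeff u r * coeff v g ≠ 0 → u = 0) :
    coeff E (r * g) = coeff 0 r * coeff E g := by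
  rw [coeff_mul]
  refine Finset.sum_eq_single_of_mem (0, E) (by simp) ?_
  rintro ⟨u, v⟩ hm hne
  by_contra hnz
  have huv : u + v = E := Finset.HasAntidiagonal.mem_antidiagonal.mp hm
  have hu0 : u = 0 := h u v huv hnz
  subst hu0
  rw [zero_add] at huv
  exact hne (by rw [huv])

lemma coeff_eq_zero_of_span (S : Set (MvPolynomial σ F)) (E : σ →₀ ℕ)
    (h : ∀ p ∈ S, ∃ w, p = monomial w (1 : F) ∧ ¬ w ≤ E) :
    ∀ g ∈ Ideal.span S, coeff E g = 0 := by
  intro g hg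
  obtain ⟨c, hsupp, rfl⟩ := Submodule.mem_span_set.mp hg
  rw [Finsupp.sum]
  rw [coeff_sum]
  refine Finset.sum_eq_zero fun p hp => ?_
  obtain ⟨w, rfl, hw⟩ := h p (hsupp hp)
  rw [smul_eq_mul, coeff_mul_monomial', if_neg hw]

/-- main finrank counting lemma -/
lemma le_card_of_gens {ι : Type} [Fintype ι] [DecidableEq ι]
    {J : Ideal (MvPolynomial σ F)} (E : ι → (σ →₀ ℕ)) (hE : Function.Injective E)
    (hkey : ∀ g ∈ J, ∀ r : MvPolynomial σ F, ∀ i,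
      coeff (E i) (r * g) = coeff 0 r * coeff (E i) g)
    (hmem : ∀ i, monomial (E i) (1 : F) ∈ J)
    {s : Finset (MvPolynomial σ F)} (hs : Ideal.span (s : Set (MvPolynomial σ F)) = J) :
    Fintype.card ι ≤ s.card := by
  classical
  set Φ : MvPolynomial σ F →ₗ[F] (ι → F) := LinearMap.pi fun i => lcoeff F (E i) with hΦ
  have hsingle : ∀ i, Pi.single i (1 : F) ∈
      Submodule.span F (Φ '' (s : Set (MvPolynomial σ F))) := by
    intro i
    have hmem' : monomial (E i) (1 : F) ∈ Ideal.span (s : Set (MvPolynomial σ F)) :=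
      hs ▸ hmem i
    obtain ⟨f, -, hf⟩ := Submodule.mem_span_finset.mp hmem'
    have key : Pi.single i (1 : F) = ∑ g ∈ s, coeff 0 (f g) • Φ g := by
      have h1 : Φ (monomial (E i) (1 : F)) = Pi.single i 1 := by
        funext i'
        simp only [hΦ, LinearMap.pi_apply, lcoeff_apply, coeff_monomial]
        rcases eq_or_ne i' i with rfl | hne
        · simp
        · rw [if_neg (fun h => hne (hE h.symm)), Pi.single_eq_of_ne hne]
      rw [← h1, ← hf, map_sum]
      refine Finset.sum_congr rfl fun g hg => ?_
      funext i'
      have hgJ : g ∈ J := hs ▸ Ideal.subset_span hg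
      simp only [hΦ, smul_eq_mul, LinearMap.pi_apply, lcoeff_apply, Pi.smul_apply,
        smul_eq_mul]
      exact hkey g hgJ (f g) i'
    rw [key]
    exact Submodule.sum_mem _ fun g hg =>
      Submodule.smul_mem _ _ (Submodule.subset_span ⟨g, hg, rfl⟩)
  have htop : Submodule.span F ((s.image Φ : Finset (ι → F)) : Set (ι → F)) = ⊤ := by
    rw [Finset.coe_image, eq_top_iff, ← (Pi.basisFun F ι).span_eq, Submodule.span_le]
    rintro _ ⟨i, rfl⟩
    simpa [Pi.basisFun_apply] using hsingle i
  calc Fintype.card ι = Module.finrank F (ι → F) :=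
        (Module.finrank_fintype_fun_eq_card F).symm
    _ = Module.finrank F (Submodule.span F ((s.image Φ : Finset (ι → F)) : Set (ι → F))) := by
        rw [htop, finrank_top]
    _ ≤ (s.image Φ).card := finrank_span_finset_le_card _
    _ ≤ s.card := Finset.card_image_le

lemma span_pair_pow (x y : MvPolynomial σ F) (d : ℕ) :
    Ideal.span {x, y} ^ d =
      Ideal.span ((fun a => x ^ a * y ^ (d - a)) '' Set.Iic d) := by
  induction d with
  | zero =>
    simp only [pow_zero, Ideal.one_eq_top]
    have hIic : Set.Iic (0 : ℕ) = {0} := by ext a; simp [Nat.le_zero]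
    rw [hIic, Set.image_singleton]
    simp only [pow_zero, Nat.sub_zero, one_mul, mul_one]
    rw [Ideal.span_singleton_one]
  | succ d ih =>
    rw [pow_succ, ih, Ideal.span_mul_span']
    apply le_antisymm
    · rw [Ideal.span_le]
      rintro _ ⟨_, ⟨a, ha, rfl⟩, q, hq, rfl⟩
      simp only [Set.mem_Iic] at ha
      dsimp only
      rcases hq with rfl | rfl
      · refine Ideal.subset_span ⟨a + 1, by simp; omega, ?_⟩
        dsimp only
        rw [show d + 1 - (a + 1) = d - a by omega]
        ring
      · refine Ideal.subset_span ⟨a, by simp; omega, ?_⟩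
        dsimp only
        rw [show d + 1 - a = (d - a) + 1 by omega]
        ring
    · rw [Ideal.span_le]
      rintro _ ⟨a, ha, rfl⟩
      simp only [Set.mem_Iic] at ha
      dsimp only
      rcases Nat.eq_zero_or_pos a with rfl | hpos
      · rw [show x ^ 0 * y ^ (d + 1 - 0) = (x ^ 0 * y ^ (d - 0)) * y by
          rw [Nat.sub_zero, Nat.sub_zero]; ring]
        exact Ideal.subset_span (Set.mul_mem_mul ⟨0, by simp, rfl⟩ (by simp))
      · obtain ⟨a', rfl⟩ : ∃ a', a = a' + 1 := ⟨a - 1, by omega⟩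
        rw [show x ^ (a' + 1) * y ^ (d + 1 - (a' + 1)) = (x ^ a' * y ^ (d - a')) * x by
          rw [show d + 1 - (a' + 1) = d - a' by omega]; ring]
        exact Ideal.subset_span (Set.mul_mem_mul ⟨a', by simp; omega, rfl⟩ (by simp))

section Main

variable {F : Type*} [Field F] {σ : Type*} [DecidableEq σ]

/-- total degree of an exponent -/
def Dtot : (σ →₀ ℕ) → ℕ := fun e => e.sum fun _ k => k

lemma Dtot_add (a b : σ →₀ ℕ) : Dtot (a + b) = Dtot a + Dtot b :=
  Finsupp.sum_add_index' (fun _ => rfl) (fun _ _ _ => rfl)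

lemma Dtot_single (i : σ) (c : ℕ) : Dtot (Finsupp.single i c) = c :=
  Finsupp.sum_single_index rfl

lemma Dtot_eq_zero {e : σ →₀ ℕ} (h : Dtot e = 0) : e = 0 := by
  ext i
  by_contra hne
  have hmem : i ∈ e.support := Finsupp.mem_support_iff.mpr (by simpa using hne)
  have : e i ≤ Dtot e := Finset.single_le_sum (fun _ _ => Nat.zero_le _) hmem
  simp only [h, Nat.le_zero] at this
  exact hne (by simpa using this)

lemma sum_three_le (v : σ →₀ ℕ) (a b c : σ) (hab : a ≠ b) (hac : a ≠ c) (hbc : b ≠ c) :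
    v a + v b + v c ≤ Dtot v := by
  have h1 : v a + v b + v c = ∑ x ∈ ({a, b, c} : Finset σ), v x := by
    rw [Finset.sum_insert (by simp [hab, hac]), Finset.sum_insert (by simp [hbc]),
      Finset.sum_singleton]
    ring
  rw [h1]
  have h2 : ∑ x ∈ ({a, b, c} : Finset σ), v x
      = ∑ x ∈ ({a, b, c} : Finset σ).filter (v · ≠ 0), v x :=
    (Finset.sum_filter_ne_zero _).symm
  rw [h2]
  refine Finset.sum_le_sum_of_subset ?_
  intro x hx
  simp only [Finset.mem_filter] at hx
  exact Finsupp.mem_support_iff.mpr hx.2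

def Dxy (i0 i1 : σ) : (σ →₀ ℕ) → ℕ := fun e => e i0 + e i1

lemma Dxy_add (i0 i1 : σ) (a b : σ →₀ ℕ) :
    Dxy i0 i1 (a + b) = Dxy i0 i1 a + Dxy i0 i1 b := by
  simp [Dxy]; ring

variable (i0 i1 : σ) {N : ℕ} (z : Fin N → σ)

/-- exponents of the 4 pure generators -/
noncomputable def ePf : Fin 4 → (σ →₀ ℕ) :=
  ![Finsupp.single i0 4, Finsupp.single i0 3 + Finsupp.single i1 1,
    Finsupp.single i0 1 + Finsupp.single i1 3, Finsupp.single i1 4]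

noncomputable def eZf (j : Fin N) : σ →₀ ℕ :=
  Finsupp.single i0 2 + Finsupp.single i1 2 + Finsupp.single (z j) 1

noncomputable def EI : Fin 4 ⊕ Fin N → (σ →₀ ℕ) := Sum.elim (ePf i0 i1) (eZf i0 i1 z)

noncomputable def gP : Fin 4 → MvPolynomial σ F :=
  ![X i0 ^ 4, X i0 ^ 3 * X i1, X i0 * X i1 ^ 3, X i1 ^ 4]

noncomputable def gG : Fin 4 ⊕ Fin N → MvPolynomial σ F :=
  Sum.elim (gP i0 i1) (fun j => X i0 ^ 2 * X i1 ^ 2 * X (z j))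

lemma mono2 (a b : ℕ) :
    (X i0 : MvPolynomial σ F) ^ a * X i1 ^ b
      = monomial (Finsupp.single i0 a + Finsupp.single i1 b) 1 := by
  rw [X_pow_eq_monomial, X_pow_eq_monomial, monomial_mul, one_mul]

lemma mono3 (a b : ℕ) (w : σ) :
    (X i0 : MvPolynomial σ F) ^ a * X i1 ^ b * X w
      = monomial (Finsupp.single i0 a + Finsupp.single i1 b + Finsupp.single w 1) 1 := by
  rw [mono2, show (X w : MvPolynomial σ F) = X w ^ 1 from (pow_one _).symm,
    X_pow_eq_monomial, monomial_mul, one_mul]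

lemma gG_eq_monomial (i : Fin 4 ⊕ Fin N) :
    (gG i0 i1 z i : MvPolynomial σ F) = monomial (EI i0 i1 z i) 1 := by
  rcases i with p | j
  · fin_cases p
    · exact X_pow_eq_monomial
    · show (X i0 : MvPolynomial σ F) ^ 3 * X i1
        = monomial (Finsupp.single i0 3 + Finsupp.single i1 1) 1
      rw [← pow_one (X i1 : MvPolynomial σ F), mono2]
    · show (X i0 : MvPolynomial σ F) * X i1 ^ 3
        = monomial (Finsupp.single i0 1 + Finsupp.single i1 3) 1
      rw [← pow_one (X i0 : MvPolynomial σ F), mono2]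
    · exact X_pow_eq_monomial
  · simp [gG, EI, eZf, mono3]

lemma eZf_apply (j : Fin N) (x : σ) :
    eZf i0 i1 z j x = (if i0 = x then 2 else 0) + (if i1 = x then 2 else 0)
      + (if z j = x then 1 else 0) := by
  simp [eZf, Finsupp.add_apply, Finsupp.single_apply]

lemma Dtot_EI_inl (p : Fin 4) : Dtot (EI i0 i1 z (Sum.inl p)) = 4 := by
  fin_cases p <;> simp [EI, ePf, Dtot_add, Dtot_single]

lemma Dtot_EI_inr (j : Fin N) : Dtot (EI i0 i1 z (Sum.inr j)) = 5 := by
  simp [EI, eZf, Dtot_add, Dtot_single]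

variable {i0 i1 z} in
lemma EI_inj (h01 : i0 ≠ i1) (h0z : ∀ j, i0 ≠ z j) (h1z : ∀ j, i1 ≠ z j)
    (hzinj : Function.Injective z) : Function.Injective (EI i0 i1 z) := by
  have h01' : i1 ≠ i0 := Ne.symm h01
  have h0z' : ∀ j, z j ≠ i0 := fun j => (h0z j).symm
  have h1z' : ∀ j, z j ≠ i1 := fun j => (h1z j).symm
  rintro (p | j) (q | k) h
  · fin_cases p <;> fin_cases q <;>
      first
        | rfl
        | (exfalso
           have h0 := DFunLike.congr_fun h i0
           simp [EI, ePf, Finsupp.add_apply, Finsupp.single_apply, h01, h01'] at h0)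
  · exfalso
    have h0 := DFunLike.congr_fun h i0
    fin_cases p <;>
      simp [EI, ePf, eZf, Finsupp.add_apply, Finsupp.single_apply, h01, h01',
        h0z' k] at h0
  · exfalso
    have h0 := DFunLike.congr_fun h i0
    fin_cases q <;>
      simp [EI, ePf, eZf, Finsupp.add_apply, Finsupp.single_apply, h01, h01',
        h0z' j] at h0
  · by_contra hne
    have hjk : j ≠ k := fun e => hne (by rw [e])
    have hzz : z k ≠ z j := fun e => hjk (hzinj e.symm)
    have h0 := DFunLike.congr_fun h (z j)
    simp [EI, eZf, Finsupp.add_apply, Finsupp.single_apply,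
      h0z' j, h1z' j, hzz] at h0


open Finset in
theorem main (F : Type*) [Field F] {σ : Type*} [DecidableEq σ] (N : ℕ)
    (i0 i1 : σ) (z : Fin N → σ) (h01 : i0 ≠ i1) (h0z : ∀ j, i0 ≠ z j)
    (h1z : ∀ j, i1 ≠ z j) (hzinj : Function.Injective z) :
    rrPow (Ideal.span (({X i0 ^ 4, X i0 ^ 3 * X i1, X i0 * X i1 ^ 3, X i1 ^ 4} :
        Set (MvPolynomial σ F)) ∪
        Set.range fun j : Fin N => X i0 ^ 2 * X i1 ^ 2 * X (z j))) 1
      = Ideal.span {X i0, X i1} ^ 4 ∧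
    IsLeast {k : ℕ | ∃ s : Finset (MvPolynomial σ F), s.card = k ∧
      Ideal.span (s : Set (MvPolynomial σ F)) =
        Ideal.span (({X i0 ^ 4, X i0 ^ 3 * X i1, X i0 * X i1 ^ 3, X i1 ^ 4} :
          Set (MvPolynomial σ F)) ∪
          Set.range fun j : Fin N => X i0 ^ 2 * X i1 ^ 2 * X (z j))} (4 + N) ∧
    IsLeast {k : ℕ | ∃ s : Finset (MvPolynomial σ F), s.card = k ∧
      Ideal.span (s : Set (MvPolynomial σ F)) = Ideal.span {X i0, X i1} ^ 4} 5 := by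
  classical
  have h01' : i1 ≠ i0 := Ne.symm h01
  have h0z' : ∀ j, z j ≠ i0 := fun j => (h0z j).symm
  have h1z' : ∀ j, z j ≠ i1 := fun j => (h1z j).symm
  set S : Set (MvPolynomial σ F) :=
    ({X i0 ^ 4, X i0 ^ 3 * X i1, X i0 * X i1 ^ 3, X i1 ^ 4} :
        Set (MvPolynomial σ F)) ∪
      Set.range (fun j : Fin N => X i0 ^ 2 * X i1 ^ 2 * X (z j)) with hS
  set I : Ideal (MvPolynomial σ F) := Ideal.span S with hIdef
  set m : Ideal (MvPolynomial σ F) := Ideal.span {X i0, X i1} with hmdef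
  have hXm : (X i0 : MvPolynomial σ F) ∈ m := Ideal.subset_span (by simp)
  have hYm : (X i1 : MvPolynomial σ F) ∈ m := Ideal.subset_span (by simp)
  have hA : (X i0 : MvPolynomial σ F) ^ 4 ∈ I := Ideal.subset_span (Or.inl (by simp))
  have hB : (X i0 : MvPolynomial σ F) ^ 3 * X i1 ∈ I := Ideal.subset_span (Or.inl (by simp))
  have hC : (X i0 : MvPolynomial σ F) * X i1 ^ 3 ∈ I := Ideal.subset_span (Or.inl (by simp))
  have hD : (X i1 : MvPolynomial σ F) ^ 4 ∈ I := Ideal.subset_span (Or.inl (by simp))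
  have hE : ∀ j, (X i0 : MvPolynomial σ F) ^ 2 * X i1 ^ 2 * X (z j) ∈ I :=
    fun j => Ideal.subset_span (Or.inr ⟨j, rfl⟩)
  have hGI : ∀ i, (monomial (EI i0 i1 z i) 1 : MvPolynomial σ F) ∈ I := by
    intro i
    rw [← gG_eq_monomial]
    rcases i with p | j
    · fin_cases p
      · exact hA
      · exact hB
      · exact hC
      · exact hD
    · exact hE j
  -- degree bounds
  have hm_le1 : m ≤ degIdeal (Dxy i0 i1) (Dxy_add i0 i1) 1 := by
    rw [hmdef, Ideal.span_le]
    intro w hw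
    simp only [Set.mem_insert_iff, Set.mem_singleton_iff] at hw
    rcases hw with rfl | rfl <;>
    · intro e he
      rw [support_X] at he
      simp only [Finset.mem_singleton] at he
      subst he
      simp [Dxy, Finsupp.single_apply, h01, h01']
  have hm_le1t : m ≤ degIdeal Dtot Dtot_add 1 := by
    rw [hmdef, Ideal.span_le]
    intro w hw
    simp only [Set.mem_insert_iff, Set.mem_singleton_iff] at hw
    rcases hw with rfl | rfl <;>
    · intro e he
      rw [support_X] at he
      simp only [Finset.mem_singleton] at he
      subst he
      simp [Dtot_single]
  have hm4_D1 : m ^ 4 ≤ degIdeal (Dxy i0 i1) (Dxy_add i0 i1) 4 :=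
    pow_le_degIdeal hm_le1 4
  have hm4_Dt : m ^ 4 ≤ degIdeal Dtot Dtot_add 4 :=
    pow_le_degIdeal hm_le1t 4
  have hIm4 : I ≤ m ^ 4 := by
    rw [hIdef, Ideal.span_le]
    intro w hw
    rcases hw with hw | ⟨j, rfl⟩
    · simp only [Set.mem_insert_iff, Set.mem_singleton_iff] at hw
      rcases hw with rfl | rfl | rfl | rfl
      · exact Ideal.pow_mem_pow hXm 4
      · have h := Ideal.mul_mem_mul (Ideal.pow_mem_pow hXm 3) hYm
        rwa [← pow_succ] at h
      · have h := Ideal.mul_mem_mul hXm (Ideal.pow_mem_pow hYm 3)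
        rwa [← pow_succ'] at h
      · exact Ideal.pow_mem_pow hYm 4
    · have h22 : (X i0 : MvPolynomial σ F) ^ 2 * X i1 ^ 2 ∈ m ^ 4 := by
        have h := Ideal.mul_mem_mul (Ideal.pow_mem_pow hXm 2) (Ideal.pow_mem_pow hYm 2)
        rwa [← pow_add] at h
      exact Ideal.mul_mem_right _ _ h22
  have hID1 : I ≤ degIdeal (Dxy i0 i1) (Dxy_add i0 i1) 4 := hIm4.trans hm4_D1
  have hIDt : I ≤ degIdeal Dtot Dtot_add 4 := hIm4.trans hm4_Dt
  -- no X^2Y^2 coefficient in I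
  have h22c : ∀ g ∈ I, coeff (Finsupp.single i0 2 + Finsupp.single i1 2) g = 0 := by
    refine coeff_eq_zero_of_span S _ ?_
    intro p hp
    rcases hp with hp | ⟨j, rfl⟩
    · simp only [Set.mem_insert_iff, Set.mem_singleton_iff] at hp
      rcases hp with rfl | rfl | rfl | rfl
      · refine ⟨Finsupp.single i0 4, X_pow_eq_monomial, fun hle => ?_⟩
        have h := Finsupp.le_def.mp hle i0
        simp [Finsupp.single_apply, Finsupp.add_apply, h01'] at h
      · refine ⟨Finsupp.single i0 3 + Finsupp.single i1 1,
          by rw [← pow_one (X i1 : MvPolynomial σ F)]; exact mono2 i0 i1 3 1,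
          fun hle => ?_⟩
        have h := Finsupp.le_def.mp hle i0
        simp [Finsupp.single_apply, Finsupp.add_apply, h01, h01'] at h
      · refine ⟨Finsupp.single i0 1 + Finsupp.single i1 3,
          by rw [← pow_one (X i0 : MvPolynomial σ F)]; exact mono2 i0 i1 1 3,
          fun hle => ?_⟩
        have h := Finsupp.le_def.mp hle i1
        simp [Finsupp.single_apply, Finsupp.add_apply, h01, h01'] at h
      · refine ⟨Finsupp.single i1 4, X_pow_eq_monomial, fun hle => ?_⟩
        have h := Finsupp.le_def.mp hle i1
        simp [Finsupp.single_apply, Finsupp.add_apply, h01, h01'] at h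
    · refine ⟨Finsupp.single i0 2 + Finsupp.single i1 2 + Finsupp.single (z j) 1,
        mono3 i0 i1 2 2 (z j), fun hle => ?_⟩
      have h := Finsupp.le_def.mp hle (z j)
      simp [Finsupp.single_apply, Finsupp.add_apply, h0z j, h1z j] at h
  -- m^12 ≤ I^3
  have hm12 : m ^ 12 ≤ I ^ 3 := by
    have cube : ∀ p q r : MvPolynomial σ F, p ∈ I → q ∈ I → r ∈ I → p * q * r ∈ I ^ 3 := by
      intro p q r hp hq hr
      have h3 : I ^ 3 = I * I * I := by ring
      rw [h3]
      exact Ideal.mul_mem_mul (Ideal.mul_mem_mul hp hq) hr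
    rw [hmdef, span_pair_pow, Ideal.span_le]
    rintro w ⟨a, ha, rfl⟩
    simp only [Set.mem_Iic] at ha
    dsimp only
    interval_cases a
    · rw [show (X i0 : MvPolynomial σ F) ^ 0 * X i1 ^ (12 - 0)
        = X i1 ^ 4 * X i1 ^ 4 * X i1 ^ 4 by norm_num; ring]
      exact cube _ _ _ hD hD hD
    · rw [show (X i0 : MvPolynomial σ F) ^ 1 * X i1 ^ (12 - 1)
        = (X i0 * X i1 ^ 3) * X i1 ^ 4 * X i1 ^ 4 by norm_num; ring]
      exact cube _ _ _ hC hD hD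
    · rw [show (X i0 : MvPolynomial σ F) ^ 2 * X i1 ^ (12 - 2)
        = (X i0 * X i1 ^ 3) * (X i0 * X i1 ^ 3) * X i1 ^ 4 by norm_num; ring]
      exact cube _ _ _ hC hC hD
    · rw [show (X i0 : MvPolynomial σ F) ^ 3 * X i1 ^ (12 - 3)
        = (X i0 ^ 3 * X i1) * X i1 ^ 4 * X i1 ^ 4 by norm_num; ring]
      exact cube _ _ _ hB hD hD
    · rw [show (X i0 : MvPolynomial σ F) ^ 4 * X i1 ^ (12 - 4)
        = X i0 ^ 4 * X i1 ^ 4 * X i1 ^ 4 by norm_num; ring]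
      exact cube _ _ _ hA hD hD
    · rw [show (X i0 : MvPolynomial σ F) ^ 5 * X i1 ^ (12 - 5)
        = X i0 ^ 4 * (X i0 * X i1 ^ 3) * X i1 ^ 4 by norm_num; ring]
      exact cube _ _ _ hA hC hD
    · rw [show (X i0 : MvPolynomial σ F) ^ 6 * X i1 ^ (12 - 6)
        = (X i0 ^ 3 * X i1) * (X i0 ^ 3 * X i1) * X i1 ^ 4 by norm_num; ring]
      exact cube _ _ _ hB hB hD
    · rw [show (X i0 : MvPolynomial σ F) ^ 7 * X i1 ^ (12 - 7)
        = X i0 ^ 4 * (X i0 ^ 3 * X i1) * X i1 ^ 4 by norm_num; ring]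
      exact cube _ _ _ hA hB hD
    · rw [show (X i0 : MvPolynomial σ F) ^ 8 * X i1 ^ (12 - 8)
        = X i0 ^ 4 * X i0 ^ 4 * X i1 ^ 4 by norm_num; ring]
      exact cube _ _ _ hA hA hD
    · rw [show (X i0 : MvPolynomial σ F) ^ 9 * X i1 ^ (12 - 9)
        = X i0 ^ 4 * X i0 ^ 4 * (X i0 * X i1 ^ 3) by norm_num; ring]
      exact cube _ _ _ hA hA hC
    · rw [show (X i0 : MvPolynomial σ F) ^ 10 * X i1 ^ (12 - 10)
        = X i0 ^ 4 * (X i0 ^ 3 * X i1) * (X i0 ^ 3 * X i1) by norm_num; ring]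
      exact cube _ _ _ hA hB hB
    · rw [show (X i0 : MvPolynomial σ F) ^ 11 * X i1 ^ (12 - 11)
        = X i0 ^ 4 * X i0 ^ 4 * (X i0 ^ 3 * X i1) by norm_num; ring]
      exact cube _ _ _ hA hA hB
    · rw [show (X i0 : MvPolynomial σ F) ^ 12 * X i1 ^ (12 - 12)
        = X i0 ^ 4 * X i0 ^ 4 * X i0 ^ 4 by norm_num; ring]
      exact cube _ _ _ hA hA hA
  refine ⟨?_, ?_, ?_⟩
  · -- Part 1 : rrPow I 1 = m ^ 4
    refine le_antisymm ?_ ?_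
    · show (⨆ k : ℕ, (I ^ (1 + k)).colon ((I ^ k : Ideal _) : Set _)) ≤ m ^ 4
      refine iSup_le fun k => ?_
      intro f hf
      have hx4k : ((X i0 : MvPolynomial σ F) ^ 4) ^ k ∈ I ^ k := Ideal.pow_mem_pow hA k
      have h1 : f * ((X i0 : MvPolynomial σ F) ^ 4) ^ k ∈ I ^ (1 + k) := by
        have h := Submodule.mem_colon.mp hf _ hx4k
        rwa [smul_eq_mul] at h
      have h2 : ∀ e ∈ (f * ((X i0 : MvPolynomial σ F) ^ 4) ^ k).support,
          (1 + k) * 4 ≤ Dxy i0 i1 e :=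
        pow_le_degIdeal hID1 (1 + k) h1
      refine mem_span_XY_pow h01 ?_
      intro e he
      have hc : coeff e f ≠ 0 := mem_support_iff.mp he
      have hco : coeff (e + Finsupp.single i0 (4 * k))
          (f * ((X i0 : MvPolynomial σ F) ^ 4) ^ k) = coeff e f := by
        rw [← pow_mul, X_pow_eq_monomial]
        simpa using coeff_mul_monomial e (Finsupp.single i0 (4 * k)) 1 f
      have hmem : e + Finsupp.single i0 (4 * k) ∈
          (f * ((X i0 : MvPolynomial σ F) ^ 4) ^ k).support :=
        mem_support_iff.mpr (by rw [hco]; exact hc)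
      have h3 := h2 _ hmem
      have hval : Dxy i0 i1 (e + Finsupp.single i0 (4 * k)) = e i0 + e i1 + 4 * k := by
        show (e + Finsupp.single i0 (4 * k)) i0 + (e + Finsupp.single i0 (4 * k)) i1 = _
        rw [Finsupp.add_apply, Finsupp.add_apply, Finsupp.single_eq_same,
          Finsupp.single_eq_of_ne' h01]
        omega
      rw [hval] at h3
      omega
    · have hstep : m ^ 4 ≤ (I ^ (1 + 2)).colon ((I ^ 2 : Ideal _) : Set _) := by
        intro w hw
        rw [Submodule.mem_colon]
        intro p hp
        rw [smul_eq_mul]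
        have hmul : m ^ 4 * I ^ 2 ≤ I ^ 3 := by
          calc m ^ 4 * I ^ 2 ≤ m ^ 4 * (m ^ 4) ^ 2 :=
                Ideal.mul_mono_right (Ideal.pow_right_mono hIm4 2)
            _ = m ^ 12 := by rw [← pow_mul, ← pow_add]
            _ ≤ I ^ 3 := hm12
        exact hmul (Ideal.mul_mem_mul hw hp)
      exact le_trans hstep (le_iSup (fun k => (I ^ (1 + k)).colon ((I ^ k : Ideal _) : Set _)) 2)
  · -- Part 2 : minimal generators of I = 4 + N
    have hGinj : Function.Injective (gG i0 i1 z (F := F)) := by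
      intro a b h
      refine EI_inj h01 h0z h1z hzinj ?_
      have h' : (monomial (EI i0 i1 z a) (1 : F)) = monomial (EI i0 i1 z b) 1 := by
        rw [← gG_eq_monomial, ← gG_eq_monomial]
        exact h
      exact monomial_left_injective (one_ne_zero (α := F)) h'
    constructor
    · refine ⟨Finset.image (gG i0 i1 z) Finset.univ, ?_, ?_⟩
      · rw [Finset.card_image_of_injective _ hGinj, Finset.card_univ]
        simp
      · have hcoe : ((Finset.image (gG i0 i1 z) Finset.univ : Finset (MvPolynomial σ F)) :
            Set (MvPolynomial σ F)) = Set.range (gG i0 i1 z) := by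
          simp
        rw [hcoe]
        have hrange : Set.range (gG i0 i1 z (F := F)) = S := by
          ext w
          constructor
          · rintro ⟨i, rfl⟩
            rcases i with p | j
            · left
              fin_cases p <;> simp [gG, gP]
            · right
              exact ⟨j, rfl⟩
          · intro hw
            rcases hw with hw | ⟨j, rfl⟩
            · simp only [Set.mem_insert_iff, Set.mem_singleton_iff] at hw
              rcases hw with rfl | rfl | rfl | rfl
              exacts [⟨Sum.inl 0, rfl⟩, ⟨Sum.inl 1, rfl⟩, ⟨Sum.inl 2, rfl⟩, ⟨Sum.inl 3, rfl⟩]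
            · exact ⟨Sum.inr j, rfl⟩
        rw [hrange]
    · rintro k ⟨s, hcard, hspan⟩
      have hkey : ∀ g ∈ I, ∀ r : MvPolynomial σ F, ∀ i,
          coeff (EI i0 i1 z i) (r * g) = coeff 0 r * coeff (EI i0 i1 z i) g := by
        intro g hg r i
        refine coeff_mul_eq ?_
        intro u v huv hnz
        have hvg : coeff v g ≠ 0 := right_ne_zero_of_mul hnz
        have hvs : v ∈ g.support := mem_support_iff.mpr hvg
        have hvt : 4 ≤ Dtot v := hIDt hg v hvs
        have hv1 : 4 ≤ Dxy i0 i1 v := hID1 hg v hvs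
        rcases i with p | j
        · have hsum : Dtot u + Dtot v = 4 := by
            rw [← Dtot_add, huv, Dtot_EI_inl]
          exact Dtot_eq_zero (by omega)
        · have hsum : Dtot u + Dtot v = 5 := by
            rw [← Dtot_add, huv, Dtot_EI_inr]
          have hxysum : Dxy i0 i1 u + Dxy i0 i1 v = 4 := by
            rw [← Dxy_add, huv]
            simp [EI, eZf, Dxy, Finsupp.add_apply, Finsupp.single_apply, h01, h01',
              h0z' j, h1z' j]
          by_contra hu0
          have hDu : Dtot u ≠ 0 := fun h => hu0 (Dtot_eq_zero h)
          have hDv4 : Dtot v = 4 := by omega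
          have hle : ∀ x, v x ≤ EI i0 i1 z (Sum.inr j) x := by
            intro x
            have h := DFunLike.congr_fun huv x
            simp only [Finsupp.add_apply] at h
            omega
          have hEapp : ∀ x, EI i0 i1 z (Sum.inr j) x
              = (if i0 = x then 2 else 0) + (if i1 = x then 2 else 0)
                + (if z j = x then 1 else 0) := fun x => eZf_apply i0 i1 z j x
          have hv1' : v i0 + v i1 = 4 := by
            have h0 := hle i0
            have h1 := hle i1
            rw [hEapp i0] at h0
            rw [hEapp i1] at h1
            simp [h01, h01', h0z' j, h1z' j] at h0 h1
            have hDxyv : Dxy i0 i1 v = v i0 + v i1 := rfl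
            omega
          have hvi0 : v i0 = 2 ∧ v i1 = 2 := by
            have h0 := hle i0
            have h1 := hle i1
            rw [hEapp i0] at h0
            rw [hEapp i1] at h1
            simp [h01, h01', h0z' j, h1z' j] at h0 h1
            omega
          have hvz : v (z j) = 0 := by
            have h3 := sum_three_le v i0 i1 (z j) h01 (h0z j) (h1z j)
            omega
          have hveq : v = Finsupp.single i0 2 + Finsupp.single i1 2 := by
            ext x
            rw [Finsupp.add_apply]
            rcases eq_or_ne x i0 with rfl | hx0
            · rw [Finsupp.single_eq_same, Finsupp.single_eq_of_ne' h01']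
              omega
            rcases eq_or_ne x i1 with rfl | hx1
            · rw [Finsupp.single_eq_of_ne' h01, Finsupp.single_eq_same]
              omega
            rcases eq_or_ne x (z j) with rfl | hxz
            · rw [Finsupp.single_eq_of_ne' (h0z j), Finsupp.single_eq_of_ne' (h1z j)]
              omega
            · have h := hle x
              rw [hEapp x, if_neg (fun hh => hx0 (Eq.symm hh)),
                if_neg (fun hh => hx1 (Eq.symm hh)),
                if_neg (fun hh => hxz (Eq.symm hh))] at h
              rw [Finsupp.single_eq_of_ne' (Ne.symm hx0), Finsupp.single_eq_of_ne' (Ne.symm hx1)]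
              omega
          exact hvg (hveq ▸ h22c g hg)
      have hcount := le_card_of_gens (EI i0 i1 z) (EI_inj h01 h0z h1z hzinj)
        hkey hGI hspan
      have hcardt : Fintype.card (Fin 4 ⊕ Fin N) = 4 + N := by simp
      omega
  · -- Part 3 : minimal generators of m ^ 4 = 5
    have hf5inj : Function.Injective
        (fun a : Fin 5 => (X i0 : MvPolynomial σ F) ^ (a : ℕ) * X i1 ^ (4 - (a : ℕ))) := by
      intro a b h
      simp only [mono2] at h
      have h2 := monomial_left_injective (one_ne_zero (α := F)) h
      have h0 := DFunLike.congr_fun h2 i0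
      rw [Finsupp.add_apply, Finsupp.add_apply, Finsupp.single_eq_same,
        Finsupp.single_eq_same, Finsupp.single_eq_of_ne' h01', Finsupp.single_eq_of_ne' h01']
        at h0
      exact Fin.ext (by omega)
    constructor
    · refine ⟨Finset.image
        (fun a : Fin 5 => (X i0 : MvPolynomial σ F) ^ (a : ℕ) * X i1 ^ (4 - (a : ℕ)))
        Finset.univ, ?_, ?_⟩
      · rw [Finset.card_image_of_injective _ hf5inj, Finset.card_univ, Fintype.card_fin]
      · have hcoe : ((Finset.image
            (fun a : Fin 5 => (X i0 : MvPolynomial σ F) ^ (a : ℕ) * X i1 ^ (4 - (a : ℕ)))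
            Finset.univ : Finset (MvPolynomial σ F)) : Set (MvPolynomial σ F)) =
            Set.range (fun a : Fin 5 =>
              (X i0 : MvPolynomial σ F) ^ (a : ℕ) * X i1 ^ (4 - (a : ℕ))) := by
          simp
        rw [hcoe, hmdef, span_pair_pow]
        congr 1
        ext w
        constructor
        · rintro ⟨a, rfl⟩
          exact ⟨(a : ℕ), Set.mem_Iic.mpr (by omega), rfl⟩
        · rintro ⟨a, ha, rfl⟩
          simp only [Set.mem_Iic] at ha
          exact ⟨⟨a, by omega⟩, rfl⟩
    · rintro k ⟨s, hcard, hspan⟩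
      have hkey : ∀ g ∈ m ^ 4, ∀ r : MvPolynomial σ F, ∀ i : Fin 5,
          coeff (Finsupp.single i0 (i : ℕ) + Finsupp.single i1 (4 - (i : ℕ))) (r * g)
            = coeff 0 r *
              coeff (Finsupp.single i0 (i : ℕ) + Finsupp.single i1 (4 - (i : ℕ))) g := by
        intro g hg r i
        refine coeff_mul_eq ?_
        intro u v huv hnz
        have hvg : coeff v g ≠ 0 := right_ne_zero_of_mul hnz
        have hvt : 4 ≤ Dtot v := hm4_Dt hg v (mem_support_iff.mpr hvg)
        have hsum : Dtot u + Dtot v = 4 := by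
          rw [← Dtot_add, huv, Dtot_add, Dtot_single, Dtot_single]
          omega
        exact Dtot_eq_zero (by omega)
      have hEinj : Function.Injective
          (fun a : Fin 5 => Finsupp.single i0 (a : ℕ) + Finsupp.single i1 (4 - (a : ℕ))) := by
        intro a b h
        have h0 := DFunLike.congr_fun h i0
        simp only [Finsupp.add_apply, Finsupp.single_eq_same,
          Finsupp.single_eq_of_ne' h01'] at h0
        exact Fin.ext (by omega)
      have hmem : ∀ a : Fin 5,
          (monomial (Finsupp.single i0 (a : ℕ) + Finsupp.single i1 (4 - (a : ℕ))) 1 :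
            MvPolynomial σ F) ∈ m ^ 4 := by
        intro a
        refine mem_span_XY_pow h01 ?_
        intro e he
        rw [support_monomial, if_neg (one_ne_zero (α := F))] at he
        simp only [Finset.mem_singleton] at he
        subst he
        rw [Finsupp.add_apply, Finsupp.add_apply, Finsupp.single_eq_same,
          Finsupp.single_eq_same, Finsupp.single_eq_of_ne' h01, Finsupp.single_eq_of_ne' h01']
        omega
      have hcount := le_card_of_gens _ hEinj hkey hmem hspan
      simp only [Fintype.card_fin] at hcount
      omega

end Main

end RR19

/-- Let `R = F[X, Y, Z_1, …, Z_n]` with `n ≥ 2` and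
`I = (X^4, X^3Y, XY^3, Y^4) + (X^2Y^2)(Z_1, …, Z_n)`.  Then `~I = (X,Y)^4`, the minimal
number of generators of `I` is `4 + n`, and the minimal number of generators of `~I`
is `5`.  (So the minimal number of generators of a regular ideal can exceed that of
its Ratliff-Rush closure.) -/
theorem stmt_19 (F : Type*) [Field F] (n : ℕ) (hn : 2 ≤ n)
    (X Y : MvPolynomial (Fin (n + 2)) F)
    (hX : X = MvPolynomial.X ⟨0, by omega⟩) (hY : Y = MvPolynomial.X ⟨1, by omega⟩)
    (Z : Fin n → MvPolynomial (Fin (n + 2)) F)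
    (hZ : ∀ j : Fin n, Z j = MvPolynomial.X ⟨(j : ℕ) + 2, by omega⟩)
    (I : Ideal (MvPolynomial (Fin (n + 2)) F))
    (hI : I = Ideal.span
      (({X ^ 4, X ^ 3 * Y, X * Y ^ 3, Y ^ 4} : Set (MvPolynomial (Fin (n + 2)) F)) ∪
        Set.range fun j : Fin n => X ^ 2 * Y ^ 2 * Z j)) :
    rrPow I 1 = Ideal.span {X, Y} ^ 4 ∧
    IsLeast {k : ℕ | ∃ s : Finset (MvPolynomial (Fin (n + 2)) F),
      s.card = k ∧ Ideal.span (s : Set (MvPolynomial (Fin (n + 2)) F)) = I} (4 + n) ∧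
    IsLeast {k : ℕ | ∃ s : Finset (MvPolynomial (Fin (n + 2)) F),
      s.card = k ∧ Ideal.span (s : Set (MvPolynomial (Fin (n + 2)) F)) =
        Ideal.span {X, Y} ^ 4} 5 := by
  subst hX hY hI
  simp only [hZ]
  exact RR19.main F n (⟨0, by omega⟩ : Fin (n + 2)) (⟨1, by omega⟩ : Fin (n + 2))
    (fun j : Fin n => (⟨(j : ℕ) + 2, by omega⟩ : Fin (n + 2)))
    (Fin.ne_of_val_ne (show (0 : ℕ) ≠ 1 by omega))
    (fun j => Fin.ne_of_val_ne (show (0 : ℕ) ≠ (j : ℕ) + 2 by omega))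
    (fun j => Fin.ne_of_val_ne (show (1 : ℕ) ≠ (j : ℕ) + 2 by omega))
    (fun a b h => by
      have hv : (a : ℕ) + 2 = (b : ℕ) + 2 := congrArg Fin.val h
      exact Fin.ext (by omega))
end
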